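/- Let ℓ_1, …, ℓ_n be n lines in ℝ², each given as the zero set of a non-constant affine functional on ℝ². Then the complement ℝ² \ (ℓ_1 ∪ ⋯ ∪ ℓ_n) has at most 1 + n(n+1)/2 connected components. -/

import Mathlib

open Real

/-- The complement in `ℝ²` of the union of the `n` lines
`{x | a i 0 * x 0 + a i 1 * x 1 + b i = 0}`. -/
def lineCompl (n : ℕ) (a : Fin n → Fin 2 → ℝ) (b : Fin n → ℝ) : Set (Fin 2 → ℝ) :=
  {x | ∀ i, a i 0 * x 0 + a i 1 * x 1 + b i ≠ 0}

/-- The set of connected components of a subset `S` of `ℝ²`. -/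
def componentsIn (S : Set (Fin 2 → ℝ)) : Set (Set (Fin 2 → ℝ)) :=
  {C | ∃ x ∈ S, C = connectedComponentIn S x}

noncomputable def sv : Bool → ℝ := fun c => if c then 1 else -1

lemma sv_sq (c : Bool) : sv c * sv c = 1 := by cases c <;> simp [sv]

lemma sign_det {u w : ℝ} {c d : Bool} (h1 : 0 < sv c * u) (h2 : 0 < sv d * w)
    (h3 : 0 < u * w) : c = d := by
  cases c <;> cases d <;> simp [sv] at h1 h2 ⊢ <;> nlinarith

/-- 1D arrangement lemma: the set of realizable sign vectors for `n` affine
functions on the line has at most `n+1` elements. -/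
lemma oned (n : ℕ) (α β : Fin n → ℝ) :
    {s : Fin n → Bool | ∃ t : ℝ, ∀ i, 0 < sv (s i) * (α i * t + β i)}.ncard ≤ n + 1 := by
  classical
  set S := {s : Fin n → Bool | ∃ t : ℝ, ∀ i, 0 < sv (s i) * (α i * t + β i)} with hS
  set roots : Finset ℝ := (Finset.univ.filter fun i => α i ≠ 0).image (fun i => -β i / α i)
      with hroots
  -- key helper
  have key : ∀ (s s' : Fin n → Bool) (t t' : ℝ),
      (∀ i, 0 < sv (s i) * (α i * t + β i)) → (∀ i, 0 < sv (s' i) * (α i * t' + β i)) →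
      (roots.filter (· < t)).max = (roots.filter (· < t')).max → t ≤ t' → s = s' := by
    intro s s' t t' ht ht' hm htt
    funext i
    by_cases hα : α i = 0
    · have h1 := ht i; have h2 := ht' i
      rw [hα] at h1 h2
      exact sign_det h1 h2 (by nlinarith [sv_sq (s i), mul_pos h1 h2])
    · set r := -β i / α i with hr
      have hβ : β i = -(α i * r) := by rw [hr]; field_simp
      have hrroots : r ∈ roots := Finset.mem_image.2 ⟨i, by simp [hα], rfl⟩
      have htne : t ≠ r := by
        intro h; have := ht i; rw [h, hβ] at this; simp at this
      have ht'ne : t' ≠ r := by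
        intro h; have := ht' i; rw [h, hβ] at this; simp at this
      -- max (filter < t) < t
      have hmaxlt : ∀ u : ℝ, (roots.filter (· < t)).max = (u : WithBot ℝ) → u < t := by
        intro u hu
        have := Finset.mem_of_max hu
        exact (Finset.mem_filter.1 this).2
      have hiff : r < t ↔ r < t' := by
        constructor
        · intro h; exact lt_of_lt_of_le h htt
        · intro h
          by_contra hnot
          have htr : t < r := lt_of_le_of_ne (not_lt.1 hnot) htne
          have hle : (r : WithBot ℝ) ≤ (roots.filter (· < t')).max :=
            Finset.le_max (Finset.mem_filter.2 ⟨hrroots, h⟩)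
          rw [← hm] at hle
          cases hmx : (roots.filter (· < t)).max with
          | bot => rw [hmx] at hle; exact absurd hle (by simp)
          | coe u =>
              rw [hmx] at hle
              have hu := hmaxlt u hmx
              have : r ≤ u := WithBot.coe_le_coe.1 hle
              linarith
      have hsame : 0 < (α i * t + β i) * (α i * t' + β i) := by
        have e1 : α i * t + β i = α i * (t - r) := by rw [hβ]; ring
        have e2 : α i * t' + β i = α i * (t' - r) := by rw [hβ]; ring
        rw [e1, e2]
        have : 0 < (t - r) * (t' - r) := by
          rcases lt_or_gt_of_ne htne with h | h
          · have : t' < r := by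
              by_contra hc
              exact absurd (hiff.2 (lt_of_le_of_ne (not_lt.1 hc) (Ne.symm ht'ne))) (not_lt.2 h.le)
            nlinarith
          · have := hiff.1 h; nlinarith
        nlinarith [sq_nonneg (α i), mul_self_pos.2 hα]
      exact sign_det (ht i) (ht' i) hsame
  -- the injection into `insert ⊥ (coe '' roots)`
  set T : Set (WithBot ℝ) := insert ⊥ ((fun r : ℝ => (r : WithBot ℝ)) '' ↑roots) with hT
  have hTfin : T.Finite := Set.Finite.insert _ ((roots : Set ℝ).toFinite.image _)
  set M : (Fin n → Bool) → WithBot ℝ :=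
    fun s => if h : s ∈ S then (roots.filter (· < h.choose)).max else ⊥ with hM
  have hmem : ∀ s ∈ S, M s ∈ T := by
    intro s hs
    rw [hM]; simp only [dif_pos hs]
    cases hmx : (roots.filter (· < hs.choose)).max with
    | bot => exact Set.mem_insert _ _
    | coe u =>
        right
        exact ⟨u, (Finset.mem_filter.1 (Finset.mem_of_max hmx)).1, rfl⟩
  have hinj : Set.InjOn M S := by
    intro s hs s' hs' hMeq
    rw [hM] at hMeq; simp only [dif_pos hs, dif_pos hs'] at hMeq
    rcases le_total hs.choose hs'.choose with h | h
    · exact key s s' _ _ hs.choose_spec hs'.choose_spec hMeq h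
    · exact (key s' s _ _ hs'.choose_spec hs.choose_spec hMeq.symm h).symm
  calc S.ncard ≤ T.ncard := Set.ncard_le_ncard_of_injOn M hmem hinj hTfin
    _ ≤ ((fun r : ℝ => (r : WithBot ℝ)) '' ↑roots).ncard + 1 := Set.ncard_insert_le _ _
    _ ≤ (roots : Set ℝ).ncard + 1 := by
        exact Nat.add_le_add_right (Set.ncard_image_le (roots : Set ℝ).toFinite) 1
    _ ≤ n + 1 := by
        rw [Set.ncard_coe_finset]
        have : roots.card ≤ (Finset.univ.filter fun i => α i ≠ 0).card :=
          Finset.card_image_le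
        have h2 : (Finset.univ.filter fun i : Fin n => α i ≠ 0).card ≤ n := by
          simpa using Finset.card_filter_le Finset.univ fun i : Fin n => α i ≠ 0
        omega

lemma cross (n : ℕ) (a : Fin n → Fin 2 → ℝ) (b : Fin n → ℝ) (c : Fin 2 → ℝ) (d : ℝ)
    (hc : c ≠ 0) :
    {s : Fin n → Bool | ∃ z : Fin 2 → ℝ,
      (∀ i, 0 < sv (s i) * (a i 0 * z 0 + a i 1 * z 1 + b i)) ∧
      c 0 * z 0 + c 1 * z 1 + d = 0}.ncard ≤ n + 1 := by
  have hcc : c 0 ≠ 0 ∨ c 1 ≠ 0 := by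
    by_contra h
    push_neg at h
    exact hc (funext fun j => by fin_cases j <;> simp [h.1, h.2])
  set Q : ℝ := c 0 ^ 2 + c 1 ^ 2 with hQdef
  have hQ : 0 < Q := by rcases hcc with h | h <;> positivity
  set p0 : ℝ := -d * c 0 / Q with hp0
  set p1 : ℝ := -d * c 1 / Q with hp1
  have hgp : c 0 * p0 + c 1 * p1 + d = 0 := by
    rw [hp0, hp1]; field_simp; ring
  set α : Fin n → ℝ := fun i => -(a i 0) * c 1 + a i 1 * c 0 with hα
  set β : Fin n → ℝ := fun i => a i 0 * p0 + a i 1 * p1 + b i with hβ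
  refine le_trans (Set.ncard_le_ncard ?_ (Set.toFinite _)) (oned n α β)
  rintro s ⟨z, hz, hzl⟩
  set t : ℝ := ((z 1 - p1) * c 0 - (z 0 - p0) * c 1) / Q with htdef
  have hdiff : c 0 * (z 0 - p0) + c 1 * (z 1 - p1) = 0 := by linear_combination hzl - hgp
  have h0 : z 0 - p0 = t * (-c 1) := by
    rw [htdef]; field_simp; linear_combination c 0 * hdiff
  have h1 : z 1 - p1 = t * c 0 := by
    rw [htdef]; field_simp; linear_combination c 1 * hdiff
  refine ⟨t, fun i => ?_⟩
  have : a i 0 * z 0 + a i 1 * z 1 + b i = α i * t + β i := by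
    rw [hα, hβ]; linear_combination a i 0 * h0 + a i 1 * h1
  rw [← this]; exact hz i

def Realizable (n : ℕ) (a : Fin n → Fin 2 → ℝ) (b : Fin n → ℝ) : Set (Fin n → Bool) :=
  {s | ∃ x : Fin 2 → ℝ, ∀ i, 0 < sv (s i) * (a i 0 * x 0 + a i 1 * x 1 + b i)}

lemma convex_comb {e u w p q : ℝ} (h1 : 0 < e * u) (h2 : 0 < e * w) (hp : 0 ≤ p)
    (hq : 0 ≤ q) (hpq : p + q = 1) : 0 < e * (p * u + q * w) := by
  have he : e * (p * u + q * w) = p * (e * u) + q * (e * w) := by ring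
  rcases hp.lt_or_eq with h | h
  · rw [he]; nlinarith [mul_pos h h1, mul_nonneg hq h2.le]
  · have hq1 : q = 1 := by linarith
    rw [he, ← h, hq1]; simpa using h2

lemma realizable_card : ∀ (n : ℕ) (a : Fin n → Fin 2 → ℝ) (b : Fin n → ℝ),
    (∀ i, a i ≠ 0) → (Realizable n a b).ncard ≤ 1 + n * (n + 1) / 2 := by
  intro n
  induction n with
  | zero =>
      intro a b _
      calc (Realizable 0 a b).ncard ≤ (Set.univ : Set (Fin 0 → Bool)).ncard :=
            Set.ncard_le_ncard (Set.subset_univ _) (Set.toFinite _)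
        _ ≤ 1 := by rw [Set.ncard_univ]; simp [Nat.card_eq_fintype_card]
  | succ n IH =>
      intro a b ha
      set a' : Fin n → Fin 2 → ℝ := fun j => a j.castSucc with ha'
      set b' : Fin n → ℝ := fun j => b j.castSucc with hb'
      have IH' := IH a' b' (fun j => ha j.castSucc)
      set A : Set (Fin n → Bool) := {s | Fin.snoc s true ∈ Realizable (n+1) a b} with hA
      set B : Set (Fin n → Bool) := {s | Fin.snoc s false ∈ Realizable (n+1) a b} with hB
      -- R is covered by the two snoc-images
      have hcov : Realizable (n+1) a b ⊆
          (fun s : Fin n → Bool => (Fin.snoc s true : Fin (n+1) → Bool)) '' A ∪ (fun s : Fin n → Bool => (Fin.snoc s false : Fin (n+1) → Bool)) '' B := by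
        intro s hs
        cases h : s (Fin.last n) with
        | true =>
            left
            exact ⟨Fin.init s, by rw [hA, Set.mem_setOf_eq, ← h, Fin.snoc_init_self]; exact hs,
              by rw [← h]; exact Fin.snoc_init_self s⟩
        | false =>
            right
            exact ⟨Fin.init s, by rw [hB, Set.mem_setOf_eq, ← h, Fin.snoc_init_self]; exact hs,
              by rw [← h]; exact Fin.snoc_init_self s⟩
      -- A and B map into Realizable n a' b'
      have hAR : A ⊆ Realizable n a' b' := by
        rintro s ⟨x, hx⟩
        refine ⟨x, fun j => ?_⟩
        have := hx j.castSucc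
        rwa [Fin.snoc_castSucc] at this
      have hBR : B ⊆ Realizable n a' b' := by
        rintro s ⟨x, hx⟩
        refine ⟨x, fun j => ?_⟩
        have := hx j.castSucc
        rwa [Fin.snoc_castSucc] at this
      -- A ∩ B maps into the crossing set
      have hABcross : A ∩ B ⊆ {s : Fin n → Bool | ∃ z : Fin 2 → ℝ,
          (∀ i, 0 < sv (s i) * (a' i 0 * z 0 + a' i 1 * z 1 + b' i)) ∧
          a (Fin.last n) 0 * z 0 + a (Fin.last n) 1 * z 1 + b (Fin.last n) = 0} := by
        rintro s ⟨⟨x, hx⟩, ⟨y, hy⟩⟩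
        set gx : ℝ := a (Fin.last n) 0 * x 0 + a (Fin.last n) 1 * x 1 + b (Fin.last n) with hgx
        set gy : ℝ := a (Fin.last n) 0 * y 0 + a (Fin.last n) 1 * y 1 + b (Fin.last n) with hgy
        have hgxpos : 0 < gx := by
          have := hx (Fin.last n); rw [Fin.snoc_last] at this; simpa [sv] using this
        have hgyneg : gy < 0 := by
          have := hy (Fin.last n); rw [Fin.snoc_last] at this
          simp only [sv, if_neg Bool.false_ne_true] at this; linarith
        have hD : 0 < gx - gy := by linarith
        set p : ℝ := -gy / (gx - gy) with hp
        set q : ℝ := gx / (gx - gy) with hq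
        have hppos : 0 ≤ p := div_nonneg (by linarith) hD.le
        have hqpos : 0 ≤ q := div_nonneg hgxpos.le hD.le
        have hpq : p + q = 1 := by rw [hp, hq]; field_simp; ring
        refine ⟨fun j => p * x j + q * y j, fun i => ?_, ?_⟩
        · have heq : a' i 0 * (p * x 0 + q * y 0) + a' i 1 * (p * x 1 + q * y 1) + b' i =
              p * (a' i 0 * x 0 + a' i 1 * x 1 + b' i) +
              q * (a' i 0 * y 0 + a' i 1 * y 1 + b' i) := by
            linear_combination (-b' i) * hpq
          rw [heq]
          have h1 := hx i.castSucc
          have h2 := hy i.castSucc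
          rw [Fin.snoc_castSucc] at h1 h2
          exact convex_comb h1 h2 hppos hqpos hpq
        · have heq : a (Fin.last n) 0 * (p * x 0 + q * y 0) +
              a (Fin.last n) 1 * (p * x 1 + q * y 1) + b (Fin.last n) =
              p * gx + q * gy := by
            rw [hgx, hgy]; linear_combination (-b (Fin.last n)) * hpq
          rw [heq, hp, hq]; field_simp; ring
      -- counting
      have hsnocT : ((fun s : Fin n → Bool => (Fin.snoc s true : Fin (n+1) → Bool)) '' A).ncard ≤ A.ncard :=
        Set.ncard_image_le (s := A) (Set.toFinite A)
      have hsnocF : ((fun s : Fin n → Bool => (Fin.snoc s false : Fin (n+1) → Bool)) '' B).ncard ≤ B.ncard :=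
        Set.ncard_image_le (s := B) (Set.toFinite B)
      have hunion : (A ∪ B).ncard + (A ∩ B).ncard = A.ncard + B.ncard :=
        Set.ncard_union_add_ncard_inter A B (Set.toFinite _) (Set.toFinite _)
      have hAB : (A ∪ B).ncard ≤ (Realizable n a' b').ncard :=
        Set.ncard_le_ncard (Set.union_subset hAR hBR) (Set.toFinite _)
      have hcrossn : (A ∩ B).ncard ≤ n + 1 :=
        le_trans (Set.ncard_le_ncard hABcross (Set.toFinite _))
          (cross n a' b' (a (Fin.last n)) (b (Fin.last n)) (ha (Fin.last n)))
      have hmain : (Realizable (n+1) a b).ncard ≤ A.ncard + B.ncard := by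
        calc (Realizable (n+1) a b).ncard
            ≤ ((fun s : Fin n → Bool => (Fin.snoc s true : Fin (n+1) → Bool)) '' A ∪ (fun s : Fin n → Bool => (Fin.snoc s false : Fin (n+1) → Bool)) '' B).ncard :=
              Set.ncard_le_ncard hcov (Set.toFinite _)
          _ ≤ ((fun s : Fin n → Bool => (Fin.snoc s true : Fin (n+1) → Bool)) '' A).ncard +
              ((fun s : Fin n → Bool => (Fin.snoc s false : Fin (n+1) → Bool)) '' B).ncard := Set.ncard_union_le _ _
          _ ≤ A.ncard + B.ncard := Nat.add_le_add hsnocT hsnocF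
      have hmul : (n+1)*(n+1+1) = n*(n+1) + 2*(n+1) := by ring
      omega

/-- sign vector of a point -/
noncomputable def sigma (n : ℕ) (a : Fin n → Fin 2 → ℝ) (b : Fin n → ℝ)
    (x : Fin 2 → ℝ) : Fin n → Bool :=
  fun i => decide (0 < a i 0 * x 0 + a i 1 * x 1 + b i)

lemma sv_pos_of_ne {v : ℝ} (hv : v ≠ 0) : 0 < sv (decide (0 < v)) * v := by
  rcases hv.lt_or_gt with h | h
  · have hd : decide (0 < v) = false := by simp [not_lt_of_gt h]
    rw [hd]; show 0 < (if False then (1:ℝ) else -1) * v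
    rw [if_neg (fun hF => hF)]; linarith
  · have hd : decide (0 < v) = true := by simp [h]
    rw [hd]; show 0 < (if True then (1:ℝ) else -1) * v
    rw [if_pos trivial]; linarith

lemma sigma_realizable {n : ℕ} {a : Fin n → Fin 2 → ℝ} {b : Fin n → ℝ} {x : Fin 2 → ℝ}
    (hx : x ∈ lineCompl n a b) : sigma n a b x ∈ Realizable n a b :=
  ⟨x, fun i => sv_pos_of_ne (hx i)⟩

lemma same_comp {n : ℕ} {a : Fin n → Fin 2 → ℝ} {b : Fin n → ℝ} {x y : Fin 2 → ℝ}
    (hx : x ∈ lineCompl n a b) (hy : y ∈ lineCompl n a b)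
    (h : sigma n a b x = sigma n a b y) :
    connectedComponentIn (lineCompl n a b) x = connectedComponentIn (lineCompl n a b) y := by
  have hseg : segment ℝ x y ⊆ lineCompl n a b := by
    rintro z ⟨p, q, hp, hq, hpq, rfl⟩
    intro i
    set e : ℝ := sv (sigma n a b x i) with he
    have hex : 0 < e * (a i 0 * x 0 + a i 1 * x 1 + b i) := sv_pos_of_ne (hx i)
    have hey : 0 < e * (a i 0 * y 0 + a i 1 * y 1 + b i) := by
      have hcongr : sigma n a b x i = sigma n a b y i := congrFun h i
      rw [he, hcongr]
      exact sv_pos_of_ne (hy i)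
    have hzval : a i 0 * (p • x + q • y) 0 + a i 1 * (p • x + q • y) 1 + b i =
        p * (a i 0 * x 0 + a i 1 * x 1 + b i) + q * (a i 0 * y 0 + a i 1 * y 1 + b i) := by
      simp only [Pi.add_apply, Pi.smul_apply, smul_eq_mul]
      linear_combination (-b i) * hpq
    intro hzero
    have := convex_comb hex hey hp hq hpq
    rw [← hzval, hzero, mul_zero] at this
    exact lt_irrefl 0 this
  have hconn : IsPreconnected (segment ℝ x y) := (convex_segment x y).isPreconnected
  have hmem : y ∈ connectedComponentIn (lineCompl n a b) x :=
    hconn.subset_connectedComponentIn (left_mem_segment ℝ x y) hseg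
      (right_mem_segment ℝ x y)
  exact connectedComponentIn_eq hmem

/-- The complement of an arrangement of `n` lines in `ℝ²` has at most
`1 + n(n+1)/2` connected components. -/
theorem line_arrangement_region_count (n : ℕ) (a : Fin n → Fin 2 → ℝ) (b : Fin n → ℝ)
    (ha : ∀ i, a i ≠ 0) :
    (componentsIn (lineCompl n a b)).Finite ∧
    (componentsIn (lineCompl n a b)).ncard ≤ 1 + n * (n + 1) / 2 := by
  classical
  set S := lineCompl n a b with hSdef
  set F : (Fin n → Bool) → Set (Fin 2 → ℝ) :=
    fun s => if h : ∃ x, x ∈ S ∧ sigma n a b x = s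
      then connectedComponentIn S h.choose else ∅ with hF
  have hsub : componentsIn S ⊆ F '' (sigma n a b '' S) := by
    rintro C ⟨x, hx, rfl⟩
    refine ⟨sigma n a b x, ⟨x, hx, rfl⟩, ?_⟩
    have hex : ∃ y, y ∈ S ∧ sigma n a b y = sigma n a b x := ⟨x, hx, rfl⟩
    rw [hF]
    simp only [dif_pos hex]
    exact same_comp hex.choose_spec.1 hx hex.choose_spec.2
  have hfin2 : (F '' (sigma n a b '' S)).Finite := ((Set.toFinite _).image F)
  constructor
  · exact hfin2.subset hsub
  · calc (componentsIn S).ncard ≤ (F '' (sigma n a b '' S)).ncard :=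
          Set.ncard_le_ncard hsub hfin2
      _ ≤ (sigma n a b '' S).ncard := Set.ncard_image_le (Set.toFinite _)
      _ ≤ (Realizable n a b).ncard := by
          refine Set.ncard_le_ncard ?_ (Set.toFinite _)
          rintro s ⟨x, hx, rfl⟩
          exact sigma_realizable hx
      _ ≤ 1 + n * (n + 1) / 2 := realizable_card n a b ha
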